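/- Let G be a finite group acting transitively on a finite set V of size v, let 2 ≤ k ≤ v/2, let γ be a k-element subset of V, and let S be the setwise stabiliser of γ in G. Suppose S acts transitively on the set of pairs (u,w) with u ∈ γ and w ∈ V∖γ. Then there exist an integer ℓ ≥ 1 and a chain of subgroups S = H₀ < H₁ < ⋯ < H_ℓ = G such that each Hᵢ is a maximal subgroup of Hᵢ₊₁ for 0 ≤ i < ℓ, each Hᵢ with 1 ≤ i ≤ ℓ acts transitively on V, and the orbits of H₀ = S on V are exactly γ and V∖γ. -/

import Mathlib

open Pointwise

private lemma subgroup_card_lt {G : Type*} [Group G] [Finite G] {K L : Subgroup G}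
    (h : K < L) : Nat.card K < Nat.card L := by
  have hs : (K : Set G) ⊂ (L : Set G) := by
    rw [Set.ssubset_iff_of_subset (by exact_mod_cast h.le)]
    obtain ⟨x, hxL, hxK⟩ := SetLike.exists_of_lt h
    exact ⟨x, hxL, hxK⟩
  have := Set.ncard_lt_ncard hs (Set.toFinite _)
  rw [← Nat.card_coe_set_eq, ← Nat.card_coe_set_eq] at this; exact this

/-- In a finite group, between any `S0 < T` there is a maximal (covering) chain. -/
private lemma chain_aux {G : Type*} [Group G] [Finite G] :
    ∀ n (T S0 : Subgroup G), Nat.card T ≤ n → S0 < T →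
    ∃ (ℓ : ℕ) (H : ℕ → Subgroup G), 1 ≤ ℓ ∧ H 0 = S0 ∧ H ℓ = T ∧
      (∀ i, i < ℓ → H i < H (i + 1) ∧
        ∀ J : Subgroup G, H i < J → J ≤ H (i + 1) → J = H (i + 1)) := by
  intro n
  induction n with
  | zero =>
    intro T S0 hn h
    have : 0 < Nat.card T := Nat.card_pos
    omega
  | succ n ih =>
    intro T S0 hn h
    -- pick a subgroup of maximal cardinality strictly between (inclusive S0, exclusive T)
    set s : Set (Subgroup G) := {J | S0 ≤ J ∧ J < T} with hs
    have hS0s : S0 ∈ s := ⟨le_refl _, h⟩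
    have : Nonempty s := ⟨⟨S0, hS0s⟩⟩
    obtain ⟨⟨M, hMs⟩, hMmax⟩ := Finite.exists_max (fun J : s => Nat.card (J : Subgroup G))
    have hMcov : ∀ J : Subgroup G, M < J → J ≤ T → J = T := by
      intro J hMJ hJT
      by_contra hne
      have hJs : J ∈ s := ⟨hMs.1.trans hMJ.le, lt_of_le_of_ne hJT hne⟩
      have := hMmax ⟨J, hJs⟩
      have := subgroup_card_lt hMJ
      simp only at *
      omega
    rcases eq_or_lt_of_le hMs.1 with heq | hlt
    · -- S0 itself is maximal in T
      refine ⟨1, fun i => if i = 0 then S0 else T, le_refl _, by simp, by simp, ?_⟩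
      intro i hi
      interval_cases i
      simp only [if_pos rfl, if_neg one_ne_zero]
      refine ⟨h, fun J hJ hJT => hMcov J (heq ▸ hJ) hJT⟩
    · -- recurse on S0 < M
      have hcard : Nat.card M ≤ n := by
        have h1 := subgroup_card_lt hMs.2
        omega
      obtain ⟨ℓ, H, hℓ, h0, hend, hstep⟩ := ih M S0 hcard hlt
      refine ⟨ℓ + 1, fun i => if i ≤ ℓ then H i else T, by omega, ?_, ?_, ?_⟩
      · simp [h0]
      · simp
      · intro i hi
        rcases Nat.lt_or_ge i ℓ with hiℓ | hiℓ
        · have h1 : i ≤ ℓ := hiℓ.le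
          have h2 : i + 1 ≤ ℓ := hiℓ
          simpa [h1, h2] using hstep i hiℓ
        · have hieq : i = ℓ := by omega
          subst hieq
          have h2 : ¬ (i + 1 ≤ i) := by omega
          simp only [le_refl, if_pos, h2, if_neg, hend]
          exact ⟨hMs.2, fun J hJ hJT => hMcov J hJ hJT⟩

/-- Lemma 1.4 (Lemma `thelemma`): if a finite group `G` acts transitively on a finite
set `V` of size `v`, `2 ≤ k ≤ v/2`, `γ` is a `k`-subset of `V`, and the setwise
stabiliser `S` of `γ` acts transitively on `γ × (V ∖ γ)`, then there is a chain of
subgroups `S = H₀ < H₁ < ⋯ < H_ℓ = G` with each `Hᵢ` maximal in `Hᵢ₊₁`, each `Hᵢ`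
(`1 ≤ i ≤ ℓ`) transitive on `V`, and the orbits of `S` on `V` exactly `γ` and `V ∖ γ`. -/
theorem stmt_0 {G V : Type*} [Group G] [Finite G] [Fintype V] [MulAction G V]
    (htrans : ∀ x y : V, ∃ g : G, g • x = y)
    (k : ℕ) (hk2 : 2 ≤ k) (hkv : 2 * k ≤ Fintype.card V)
    (γ : Set V) (hγk : γ.ncard = k)
    (hpairs : ∀ u u' w w' : V, u ∈ γ → u' ∈ γ → w ∉ γ → w' ∉ γ →
      ∃ g ∈ MulAction.stabilizer G γ, g • u = u' ∧ g • w = w') :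
    ∃ (ℓ : ℕ) (H : ℕ → Subgroup G), 1 ≤ ℓ ∧
      H 0 = MulAction.stabilizer G γ ∧ H ℓ = ⊤ ∧
      (∀ i, i < ℓ → H i < H (i + 1) ∧
        ∀ J : Subgroup G, H i < J → J ≤ H (i + 1) → J = H (i + 1)) ∧
      (∀ i, 1 ≤ i → i ≤ ℓ → ∀ x y : V, ∃ g ∈ H i, g • x = y) ∧
      (∀ u ∈ γ, MulAction.orbit (H 0) u = γ) ∧
      (∀ w, w ∉ γ → MulAction.orbit (H 0) w = γᶜ) := by
  set S := MulAction.stabilizer G γ with hS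
  -- basic membership facts for stabiliser elements
  have hmem : ∀ g ∈ S, ∀ x : V, x ∈ γ ↔ g • x ∈ γ := by
    intro g hg x
    have hgγ : g • γ = γ := hg
    constructor
    · intro hx
      rw [← hgγ]
      exact Set.smul_mem_smul_set hx
    · intro hx
      rw [← hgγ] at hx
      exact (Set.smul_mem_smul_set_iff).1 hx
  -- γ and its complement are nonempty
  have hγfin : γ.Finite := Set.toFinite _
  have hγne : γ.Nonempty := by
    rw [← Set.ncard_pos hγfin] at *
    omega
  have hcne : γᶜ.Nonempty := by
    have h1 : γ.ncard + γᶜ.ncard = Fintype.card V := by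
      rw [Set.ncard_add_ncard_compl, Nat.card_eq_fintype_card]
    have : γᶜ.ncard ≠ 0 := by omega
    rcases Set.eq_empty_or_nonempty γᶜ with he | hne
    · rw [he] at this; simp at this
    · exact hne
  obtain ⟨u0, hu0⟩ := hγne
  obtain ⟨w0, hw0⟩ := hcne
  rw [Set.mem_compl_iff] at hw0
  -- transitivity of S within γ and within γᶜ
  have Stransγ : ∀ u u' : V, u ∈ γ → u' ∈ γ → ∃ g ∈ S, g • u = u' := by
    intro u u' hu hu'
    obtain ⟨g, hg, h1, _⟩ := hpairs u u' w0 w0 hu hu' hw0 hw0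
    exact ⟨g, hg, h1⟩
  have Stransc : ∀ w w' : V, w ∉ γ → w' ∉ γ → ∃ g ∈ S, g • w = w' := by
    intro w w' hw hw'
    obtain ⟨g, hg, _, h2⟩ := hpairs u0 u0 w w' hu0 hu0 hw hw'
    exact ⟨g, hg, h2⟩
  -- S is a proper subgroup
  have hSne : S ≠ ⊤ := by
    intro h
    obtain ⟨g, hg⟩ := htrans u0 w0
    have : g ∈ S := h ▸ Subgroup.mem_top g
    exact hw0 (hg ▸ (hmem g this u0).1 hu0)
  have hSlt : S < ⊤ := lt_of_le_of_ne le_top hSne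
  -- any subgroup strictly containing S is transitive on V
  have key : ∀ J : Subgroup G, S < J → ∀ x y : V, ∃ g ∈ J, g • x = y := by
    intro J hJ x y
    obtain ⟨g, hgJ, hgS⟩ := SetLike.exists_of_lt hJ
    -- g moves some point of γ out of γ
    have : ∃ u ∈ γ, g • u ∉ γ := by
      by_contra hcon
      push_neg at hcon
      apply hgS
      have hsub : g • γ ⊆ γ := by
        rintro _ ⟨u, hu, rfl⟩
        exact hcon u hu
      have : g • γ = γ :=
        Set.eq_of_subset_of_ncard_le hsub (by rw [Set.ncard_smul_set]) (Set.toFinite _)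
      exact this
    obtain ⟨u1, hu1, hgu1⟩ := this
    have hSJ : ∀ s : G, s ∈ S → s ∈ J := fun s hs => hJ.le hs
    by_cases hx : x ∈ γ <;> by_cases hy : y ∈ γ
    · obtain ⟨s, hs, hsxy⟩ := Stransγ x y hx hy
      exact ⟨s, hSJ s hs, hsxy⟩
    · -- x ∈ γ, y ∉ γ : send x to u1, apply g, then into y
      obtain ⟨s1, hs1, hs1x⟩ := Stransγ x u1 hx hu1
      obtain ⟨s2, hs2, hs2y⟩ := Stransc (g • u1) y hgu1 hy
      refine ⟨s2 * g * s1, ?_, ?_⟩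
      · exact mul_mem (mul_mem (hSJ s2 hs2) hgJ) (hSJ s1 hs1)
      · rw [mul_smul, mul_smul, hs1x, hs2y]
    · -- x ∉ γ, y ∈ γ
      obtain ⟨s1, hs1, hs1x⟩ := Stransc x (g • u1) hx hgu1
      obtain ⟨s2, hs2, hs2y⟩ := Stransγ u1 y hu1 hy
      refine ⟨s2 * g⁻¹ * s1, ?_, ?_⟩
      · exact mul_mem (mul_mem (hSJ s2 hs2) (inv_mem hgJ)) (hSJ s1 hs1)
      · rw [mul_smul, mul_smul, hs1x, inv_smul_smul, hs2y]
    · obtain ⟨s, hs, hsxy⟩ := Stransc x y hx hy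
      exact ⟨s, hSJ s hs, hsxy⟩
  -- build the maximal chain
  obtain ⟨ℓ, H, hℓ, h0, hend, hstep⟩ := chain_aux (Nat.card (⊤ : Subgroup G)) ⊤ S le_rfl hSlt
  -- chain is monotone, so S < H i for 1 ≤ i ≤ ℓ
  have hmono : ∀ i, i ≤ ℓ → H 0 ≤ H i := by
    intro i hi
    induction i with
    | zero => exact le_rfl
    | succ n ihn =>
      exact (ihn (by omega)).trans (hstep n (by omega)).1.le
  have hSlti : ∀ i, 1 ≤ i → i ≤ ℓ → S < H i := by
    intro i h1 h2
    calc S = H 0 := h0.symm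
    _ < H 1 := (hstep 0 (by omega)).1
    _ ≤ H i := by
        rcases Nat.exists_eq_add_of_le h1 with ⟨m, rfl⟩
        clear h1
        induction m with
        | zero => exact le_rfl
        | succ n ihn =>
          have := (hstep (1 + n) (by omega)).1.le
          exact (ihn (by omega)).trans this
  refine ⟨ℓ, H, hℓ, h0, hend, hstep, ?_, ?_, ?_⟩
  · intro i h1 h2 x y
    exact key (H i) (hSlti i h1 h2) x y
  · -- orbits inside γ
    intro u hu
    rw [h0]
    ext x
    constructor
    · rintro ⟨⟨s, hs⟩, rfl⟩
      exact (hmem s hs u).1 hu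
    · intro hx
      obtain ⟨s, hs, hsx⟩ := Stransγ u x hu hx
      exact ⟨⟨s, hs⟩, hsx⟩
  · -- orbits outside γ
    intro w hw
    rw [h0]
    ext x
    simp only [Set.mem_compl_iff]
    constructor
    · rintro ⟨⟨s, hs⟩, rfl⟩
      exact fun hx => hw ((hmem s hs w).2 hx)
    · intro hx
      obtain ⟨s, hs, hsx⟩ := Stransc w x hw hx
      exact ⟨⟨s, hs⟩, hsx⟩
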